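/- Let P and Q be positive semidefinite operators on a finite-dimensional complex Hilbert space. Then the squared Frobenius (Hilbert–Schmidt) norm of √P − √Q is at most the trace norm of P − Q: ‖√P − √Q‖₂² ≤ ‖P − Q‖₁. -/

import Mathlib

open Matrix
open scoped ComplexOrder

/-- The square root of a positive semidefinite matrix (the definition removed from Mathlib). -/
noncomputable def Matrix.PosSemidef.sqrt {n 𝕜 : Type*} [Fintype n] [RCLike 𝕜] [DecidableEq n]
    {A : Matrix n n 𝕜} (hA : A.PosSemidef) : Matrix n n 𝕜 :=
  (hA.1.eigenvectorUnitary : Matrix n n 𝕜) * diagonal ((↑) ∘ (√·) ∘ hA.1.eigenvalues) *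
    (star hA.1.eigenvectorUnitary : Matrix n n 𝕜)

lemma Matrix.IsHermitian.spectral_theorem' {n 𝕜 : Type*} [Fintype n] [RCLike 𝕜] [DecidableEq n]
    {A : Matrix n n 𝕜} (hA : A.IsHermitian) :
    A = (hA.eigenvectorUnitary : Matrix n n 𝕜) * diagonal (RCLike.ofReal ∘ hA.eigenvalues) *
      star (hA.eigenvectorUnitary : Matrix n n 𝕜) := by
  conv_lhs => rw [hA.spectral_theorem]
  rw [Unitary.conjStarAlgAut_apply]

lemma Matrix.IsHermitian.star_mul_self_mul_eq_diagonal {n 𝕜 : Type*} [Fintype n] [RCLike 𝕜]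
    [DecidableEq n] {A : Matrix n n 𝕜} (hA : A.IsHermitian) :
    star (hA.eigenvectorUnitary : Matrix n n 𝕜) * A * (hA.eigenvectorUnitary : Matrix n n 𝕜)
      = diagonal (RCLike.ofReal ∘ hA.eigenvalues) := by
  have := hA.conjStarAlgAut_star_eigenvectorUnitary
  rw [Unitary.conjStarAlgAut_star_apply] at this
  exact this

lemma Matrix.PosSemidef.posSemidef_sqrt {n 𝕜 : Type*} [Fintype n] [RCLike 𝕜] [DecidableEq n]
    {A : Matrix n n 𝕜} (hA : A.PosSemidef) : hA.sqrt.PosSemidef := by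
  unfold Matrix.PosSemidef.sqrt
  rw [Matrix.star_eq_conjTranspose]
  exact (posSemidef_diagonal_iff.mpr fun i => by
    simpa using Real.sqrt_nonneg (hA.1.eigenvalues i)).mul_mul_conjTranspose_same _

lemma Matrix.PosSemidef.sqrt_mul_self {n 𝕜 : Type*} [Fintype n] [RCLike 𝕜] [DecidableEq n]
    {A : Matrix n n 𝕜} (hA : A.PosSemidef) : hA.sqrt * hA.sqrt = A := by
  unfold Matrix.PosSemidef.sqrt
  conv_rhs => rw [hA.1.spectral_theorem']
  have hU : (star hA.1.eigenvectorUnitary : Matrix n n 𝕜) * (hA.1.eigenvectorUnitary : Matrix n n 𝕜)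
      = 1 := Unitary.coe_star_mul_self _
  simp only [← mul_assoc]
  rw [mul_assoc _ (star _) _, hU, mul_one, mul_assoc _ (diagonal _) (diagonal _),
    diagonal_mul_diagonal]
  congr 3
  funext i
  simp only [Function.comp_apply]
  rw [← RCLike.ofReal_mul, Real.mul_self_sqrt (hA.eigenvalues_nonneg i)]

open scoped MatrixOrder in
lemma Matrix.PosSemidef.eq_sqrt_of_sq_eq {n 𝕜 : Type*} [Fintype n] [RCLike 𝕜] [DecidableEq n]
    {A B : Matrix n n 𝕜} (hB : B.PosSemidef) (hA : A.PosSemidef) (h : B ^ 2 = A) :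
    B = hA.sqrt := by
  have hA0 : 0 ≤ A := Matrix.nonneg_iff_posSemidef.mpr hA
  have hB0 : 0 ≤ B := Matrix.nonneg_iff_posSemidef.mpr hB
  have h1 : CFC.sqrt A = B := CFC.sqrt_unique (by rw [← h, pow_two]) hB0
  rw [← h1, CFC.sqrt_eq_real_sqrt A hA0, cfcₙ_eq_cfc (hf0 := Real.sqrt_zero),
    hA.1.cfc_eq, Matrix.IsHermitian.cfc, Unitary.conjStarAlgAut_apply]
  rfl

/-- The trace (nuclear) norm of a complex matrix: the trace of `√(AᴴA)`. -/
noncomputable def traceNorm {n : Type*} [Fintype n] [DecidableEq n]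
    (A : Matrix n n ℂ) : ℝ :=
  ((Matrix.posSemidef_conjTranspose_mul_self A).sqrt.trace).re

/-- The squared Frobenius (Hilbert–Schmidt) norm of a complex matrix. -/
noncomputable def frobSq {n : Type*} [Fintype n] [DecidableEq n]
    (A : Matrix n n ℂ) : ℝ :=
  ((Aᴴ * A).trace).re

/-- For a Hermitian `D`, the trace norm is the sum of absolute values of eigenvalues. -/
lemma traceNorm_hermitian {n : Type*} [Fintype n] [DecidableEq n]
    {D : Matrix n n ℂ} (hD : D.IsHermitian) :
    traceNorm D = ∑ i, |hD.eigenvalues i| := by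
  set V : Matrix n n ℂ := (hD.eigenvectorUnitary : Matrix n n ℂ)
  have hV1 : V * star V = 1 := Matrix.mem_unitaryGroup_iff.mp hD.eigenvectorUnitary.2
  have hV2 : star V * V = 1 := Matrix.mem_unitaryGroup_iff'.mp hD.eigenvectorUnitary.2
  set R : Matrix n n ℂ := V * diagonal (fun i => ((|hD.eigenvalues i| : ℝ) : ℂ)) * star V with hRdef
  have hR : R.PosSemidef := by
    rw [hRdef, Matrix.star_eq_conjTranspose]
    exact (posSemidef_diagonal_iff.mpr fun i => by
      simpa using Complex.ofReal_nonneg.mpr (abs_nonneg _)).mul_mul_conjTranspose_same V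
  have hdd : ∀ (f : n → ℝ), (V * diagonal (fun i => ((f i : ℝ) : ℂ)) * star V) ^ 2
      = V * diagonal (fun i => ((f i * f i : ℝ) : ℂ)) * star V := by
    intro f
    have : (V * diagonal (fun i => ((f i : ℝ) : ℂ)) * star V)
        * (V * diagonal (fun i => ((f i : ℝ) : ℂ)) * star V)
        = V * (diagonal (fun i => ((f i : ℝ) : ℂ)) * (star V * V)
            * diagonal (fun i => ((f i : ℝ) : ℂ))) * star V := by
      simp only [mul_assoc]
    rw [pow_two, this, hV2, mul_one, diagonal_mul_diagonal]
    push_cast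
    rfl
  have hspec : D = V * diagonal (fun i => ((hD.eigenvalues i : ℝ) : ℂ)) * star V :=
    hD.spectral_theorem'
  have hR2 : R ^ 2 = Dᴴ * D := by
    rw [hD.eq, hRdef, hdd]
    simp only [abs_mul_abs_self]
    conv_rhs => rw [hspec]
    have := hdd hD.eigenvalues
    rw [pow_two] at this
    exact this.symm
  have hsqrt : R = (Matrix.posSemidef_conjTranspose_mul_self D).sqrt :=
    hR.eq_sqrt_of_sq_eq _ hR2
  rw [traceNorm, ← hsqrt, hRdef, Matrix.trace_mul_cycle, hV2, one_mul, Matrix.trace_diagonal]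
  rw [Complex.re_sum]
  simp

/-- key diagonal sum bound -/
lemma sum_abs_re_diag_le {n : Type*} [Fintype n] [DecidableEq n]
    {D : Matrix n n ℂ} (hD : D.IsHermitian) (U : Matrix.unitaryGroup n ℂ) :
    ∑ i, |((star U.1 * D * U.1) i i).re| ≤ traceNorm D := by
  rw [traceNorm_hermitian hD]
  set V : Matrix n n ℂ := (hD.eigenvectorUnitary : Matrix n n ℂ)
  have hV1 : V * star V = 1 := Matrix.mem_unitaryGroup_iff.mp hD.eigenvectorUnitary.2
  set W : Matrix n n ℂ := star V * U.1 with hWdef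
  have hU1 : U.1 * star U.1 = 1 := Matrix.mem_unitaryGroup_iff.mp U.2
  have hW1 : W * star W = 1 := by
    rw [hWdef, Matrix.star_mul, star_star]
    calc star V * U.1 * (star U.1 * V) = star V * (U.1 * star U.1) * V := by
          simp only [mul_assoc]
      _ = 1 := by rw [hU1, mul_one, ← Matrix.mem_unitaryGroup_iff'.mp hD.eigenvectorUnitary.2]
  set μ := hD.eigenvalues
  have hconj : star U.1 * D * U.1 = star W * diagonal (fun j => ((μ j : ℝ) : ℂ)) * W := by
    rw [hWdef, Matrix.star_mul, star_star]
    have hspec : D = V * diagonal (fun j => ((μ j : ℝ) : ℂ)) * star V := hD.spectral_theorem'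
    rw [hspec]
    simp only [mul_assoc]
  have hentry : ∀ i, ((star U.1 * D * U.1) i i).re
      = ∑ j, μ j * Complex.normSq (W j i) := by
    intro i
    rw [hconj, mul_assoc, Matrix.mul_apply, Complex.re_sum]
    apply Finset.sum_congr rfl
    intro j _
    rw [Matrix.star_apply, Matrix.diagonal_mul]
    have : star (W j i) * (((μ j : ℝ) : ℂ) * W j i)
        = ((μ j * Complex.normSq (W j i) : ℝ) : ℂ) := by
      rw [Complex.star_def, Complex.ofReal_mul, Complex.normSq_eq_conj_mul_self]; ring
    rw [this, Complex.ofReal_re]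
  have hrow : ∀ j, ∑ i, Complex.normSq (W j i) = 1 := by
    intro j
    have := congrFun (congrFun hW1 j) j
    rw [Matrix.mul_apply] at this
    simp only [Matrix.star_apply, Matrix.one_apply_eq] at this
    have h2 : ∀ i, W j i * star (W j i) = ((Complex.normSq (W j i) : ℝ) : ℂ) := by
      intro i; rw [Complex.star_def, Complex.mul_conj]
    rw [Finset.sum_congr rfl (fun i _ => h2 i)] at this
    have := congrArg Complex.re this
    rw [Complex.re_sum] at this
    simpa using this
  calc ∑ i, |((star U.1 * D * U.1) i i).re|
      ≤ ∑ i, ∑ j, |μ j| * Complex.normSq (W j i) := by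
        apply Finset.sum_le_sum
        intro i _
        rw [hentry i]
        refine (Finset.abs_sum_le_sum_abs _ _).trans ?_
        apply Finset.sum_le_sum
        intro j _
        rw [abs_mul, abs_of_nonneg (Complex.normSq_nonneg _)]
    _ = ∑ j, |μ j| := by
        rw [Finset.sum_comm]
        congr 1; ext j
        rw [← Finset.mul_sum, hrow j, mul_one]

theorem frobSq_sqrt_sub_sqrt_le_traceNorm
    {n : Type*} [Fintype n] [DecidableEq n]
    (P Q : Matrix n n ℂ) (hP : P.PosSemidef) (hQ : Q.PosSemidef) :
    frobSq (hP.sqrt - hQ.sqrt) ≤ traceNorm (P - Q) := by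
  set S : Matrix n n ℂ := hP.sqrt - hQ.sqrt with hSdef
  set T : Matrix n n ℂ := hP.sqrt + hQ.sqrt with hTdef
  have hS : S.IsHermitian := hP.posSemidef_sqrt.1.sub hQ.posSemidef_sqrt.1
  set U : Matrix n n ℂ := (hS.eigenvectorUnitary : Matrix n n ℂ) with hUdef
  have hU1 : U * star U = 1 := Matrix.mem_unitaryGroup_iff.mp hS.eigenvectorUnitary.2
  have hU2 : star U * U = 1 := Matrix.mem_unitaryGroup_iff'.mp hS.eigenvectorUnitary.2
  set lam := hS.eigenvalues with hlamdef
  set Lam : Matrix n n ℂ := diagonal (fun i => ((lam i : ℝ) : ℂ)) with hLamdef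
  have hdiag : star U * S * U = Lam := hS.star_mul_self_mul_eq_diagonal
  set B : Matrix n n ℂ := star U * T * U with hBdef
  -- S*T + T*S = 2(P-Q)
  have hkey : S * T + T * S = (P - Q) + (P - Q) := by
    simp only [hSdef, hTdef, sub_mul, mul_sub, mul_add, add_mul,
      hP.sqrt_mul_self, hQ.sqrt_mul_self]
    abel
  -- conjugated version
  have hM : star U * (P - Q) * U + star U * (P - Q) * U = Lam * B + B * Lam := by
    have h1 : star U * (S * T) * U = Lam * B := by
      rw [← hdiag, hBdef]
      have h0 : S * T = S * (U * star U) * T := by rw [hU1, mul_one]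
      rw [h0]
      simp only [mul_assoc]
    have h2 : star U * (T * S) * U = B * Lam := by
      rw [← hdiag, hBdef]
      have h0 : T * S = T * (U * star U) * S := by rw [hU1, mul_one]
      rw [h0]
      simp only [mul_assoc]
    have h3 : star U * ((P - Q) + (P - Q)) * U
        = star U * (P - Q) * U + star U * (P - Q) * U := by
      rw [Matrix.mul_add, Matrix.add_mul]
    rw [← h3, ← hkey, Matrix.mul_add, Matrix.add_mul, h1, h2]
  have hMdiag : ∀ i, ((star U * (P - Q) * U) i i).re = lam i * (B i i).re := by
    intro i
    have := congrFun (congrFun hM i) i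
    simp only [Matrix.add_apply, hLamdef, Matrix.diagonal_mul, Matrix.mul_diagonal] at this
    have h2 : (star U * (P - Q) * U) i i = ((lam i : ℝ) : ℂ) * B i i := by
      have : (star U * (P - Q) * U) i i + (star U * (P - Q) * U) i i
          = ((lam i : ℝ) : ℂ) * B i i + ((lam i : ℝ) : ℂ) * B i i := by
        rw [this]; ring
      have h3 := congrArg (fun z => z / 2) this
      field_simp at h3
      linear_combination h3
    rw [h2, Complex.mul_re, Complex.ofReal_re, Complex.ofReal_im]
    ring
  -- psd of conjugations: B - Lam and B + Lam
  have hconjpsd : ∀ {X : Matrix n n ℂ}, X.PosSemidef → (star U * X * U).PosSemidef := by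
    intro X hX
    have := hX.mul_mul_conjTranspose_same (star U)
    rwa [Matrix.star_eq_conjTranspose, Matrix.conjTranspose_conjTranspose] at this
  have hdiagpsd : ∀ {N : Matrix n n ℂ}, N.PosSemidef → ∀ i, 0 ≤ (N i i).re := by
    intro N hN i
    have := hN.diag_nonneg (i := i)
    exact (Complex.le_def.mp this).1
  have hBLam1 : (B - Lam).PosSemidef := by
    have hTS : (T - S).PosSemidef := by
      have : T - S = hQ.sqrt + hQ.sqrt := by rw [hTdef, hSdef]; abel
      rw [this]; exact hQ.posSemidef_sqrt.add hQ.posSemidef_sqrt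
    have := hconjpsd hTS
    have heq : star U * (T - S) * U = B - Lam := by
      rw [hBdef, ← hdiag, Matrix.mul_sub, Matrix.sub_mul]
    rwa [heq] at this
  have hBLam2 : (B + Lam).PosSemidef := by
    have hTS : (T + S).PosSemidef := by
      have : T + S = hP.sqrt + hP.sqrt := by rw [hTdef, hSdef]; abel
      rw [this]; exact hP.posSemidef_sqrt.add hP.posSemidef_sqrt
    have := hconjpsd hTS
    have heq : star U * (T + S) * U = B + Lam := by
      rw [hBdef, ← hdiag, Matrix.mul_add, Matrix.add_mul]
    rwa [heq] at this
  have habs : ∀ i, |lam i| ≤ (B i i).re := by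
    intro i
    have h1 := hdiagpsd hBLam1 i
    have h2 := hdiagpsd hBLam2 i
    simp only [Matrix.sub_apply, Matrix.add_apply, hLamdef, Matrix.diagonal_apply_eq,
      Complex.sub_re, Complex.add_re, Complex.ofReal_re] at h1 h2
    rw [abs_le]; constructor <;> linarith
  -- frobSq S = ∑ lam i ^ 2
  have hfrob : frobSq S = ∑ i, lam i * lam i := by
    have hSS : Sᴴ * S = U * diagonal (fun i => ((lam i * lam i : ℝ) : ℂ)) * star U := by
      rw [hS.eq]
      conv_lhs => rw [hS.spectral_theorem']
      have h5 : (U * diagonal (RCLike.ofReal ∘ hS.eigenvalues) * star U)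
          * (U * diagonal (RCLike.ofReal ∘ hS.eigenvalues) * star U)
          = U * (diagonal (RCLike.ofReal ∘ hS.eigenvalues) * (star U * U)
              * diagonal (RCLike.ofReal ∘ hS.eigenvalues)) * star U := by
        simp only [mul_assoc]
      rw [h5, hU2, mul_one, diagonal_mul_diagonal]
      congr 1
      congr 1
      funext i
      simp [Function.comp, Complex.ofReal_mul]
      rfl
    rw [frobSq, hSS, Matrix.trace_mul_cycle, hU2, one_mul, Matrix.trace_diagonal,
      Complex.re_sum]
    simp
  rw [hfrob]
  calc ∑ i, lam i * lam i ≤ ∑ i, |((star U * (P - Q) * U) i i).re| := by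
        apply Finset.sum_le_sum
        intro i _
        rw [hMdiag i, abs_mul]
        have hB0 : 0 ≤ (B i i).re := le_trans (abs_nonneg _) (habs i)
        rw [abs_of_nonneg hB0]
        calc lam i * lam i ≤ |lam i| * |lam i| := by
              rw [← abs_mul_abs_self]
          _ ≤ |lam i| * (B i i).re := by
              exact mul_le_mul_of_nonneg_left (habs i) (abs_nonneg _)
    _ ≤ traceNorm (P - Q) := sum_abs_re_diag_le (hP.1.sub hQ.1) hS.eigenvectorUnitary
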